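/- Let (a,b,c) be a hyperbolic triple (positive integers with a ≤ b ≤ c and 1/a+1/b+1/c < 1). For the exponents e_j = j (j = 1,...,r) of type A_r with r ≥ 10, we have Σ_{k∈{a,b,c}} Σ_{j=1}^r (1 + 2⌊j/k⌋) < r(r+2). -/

import Mathlib

lemma sum_div_block (k : ℕ) (hk : 0 < k) : ∀ A, (∑ j ∈ Finset.Ioc A (A + k), j / k) = A + 1
  | 0 => by
    obtain ⟨k', rfl⟩ : ∃ k', k = k' + 1 := ⟨k - 1, by omega⟩
    have h0 : (∑ j ∈ Finset.Ioc 0 k', j / (k' + 1)) = 0 :=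
      Finset.sum_eq_zero (fun j hj => Nat.div_eq_of_lt (by
        simp only [Finset.mem_Ioc] at hj; omega))
    rw [zero_add, Finset.sum_Ioc_succ_top (Nat.zero_le k'), h0, Nat.div_self (by omega), zero_add]
  | (A+1) => by
    have hIH := sum_div_block k hk A
    rw [show A + 1 + k = A + k + 1 by ring]
    have hsplit : (∑ j ∈ Finset.Ioc A (A + k + 1), j / k)
        = (∑ j ∈ Finset.Ioc A (A + 1), j / k) + ∑ j ∈ Finset.Ioc (A + 1) (A + k + 1), j / k :=
      (Finset.sum_Ioc_consecutive _ (by omega) (by omega)).symm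
    have htop : (∑ j ∈ Finset.Ioc A (A + k + 1), j / k)
        = (∑ j ∈ Finset.Ioc A (A + k), j / k) + (A + k + 1) / k :=
      Finset.sum_Ioc_succ_top (by omega) _
    have hsingle : (∑ j ∈ Finset.Ioc A (A + 1), j / k) = (A + 1) / k := by
      rw [Nat.Ioc_succ_singleton, Finset.sum_singleton]
    have hdiv : (A + k + 1) / k = (A + 1) / k + 1 := by
      rw [show A + k + 1 = A + 1 + k by ring, Nat.add_div_right _ hk]
    linarith [hsplit, htop, hsingle, hdiv, hIH]

lemma two_mul_sum_div (k m : ℕ) (hk : 0 < k) :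
    ∀ t, 2 * (∑ j ∈ Finset.Ioc m (m + t * k), j / k) = t * (2 * m + 2) + k * (t * (t - 1))
  | 0 => by simp
  | (t+1) => by
    rw [show m + (t + 1) * k = (m + t * k) + k by ring,
      ← Finset.sum_Ioc_consecutive _ (Nat.le_add_right m (t * k)) (Nat.le_add_right _ k),
      Nat.mul_add, two_mul_sum_div k m hk t, sum_div_block k hk (m + t * k)]
    cases t with
    | zero => simp; ring
    | succ t' => simp only [Nat.add_sub_cancel]; ring

lemma key237 : ∀ r, 10 ≤ r → (∑ j ∈ Finset.Icc 1 r, ((1 + 2 * (j / 2)) + (1 + 2 * (j / 3)) + (1 + 2 * (j / 7)))) < r * (r + 2) := by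
  intro r
  induction r using Nat.strong_induction_on with
  | _ r ih =>
    intro hr
    by_cases h : r ≤ 51
    · interval_cases r <;> decide
    · obtain ⟨m, rfl⟩ : ∃ m, r = m + 42 := ⟨r - 42, by omega⟩
      have ih' := ih m (by omega) (by omega)
      rw [show Finset.Icc 1 = Finset.Icc (0 + 1) from rfl, Finset.Icc_add_one_left_eq_Ioc] at ih' ⊢
      rw [← Finset.sum_Ioc_consecutive _ (Nat.zero_le m) (by omega : m ≤ m + 42)]
      have h2 := two_mul_sum_div 2 m (by norm_num) 21
      have h3 := two_mul_sum_div 3 m (by norm_num) 14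
      have h7 := two_mul_sum_div 7 m (by norm_num) 6
      norm_num at h2 h3 h7
      have hW : (∑ j ∈ Finset.Ioc m (m + 42), ((1 + 2 * (j / 2)) + (1 + 2 * (j / 3)) + (1 + 2 * (j / 7))))
          = 126 + 2 * (∑ j ∈ Finset.Ioc m (m + 42), j / 2) + 2 * (∑ j ∈ Finset.Ioc m (m + 42), j / 3)
            + 2 * (∑ j ∈ Finset.Ioc m (m + 42), j / 7) := by
        simp only [Finset.sum_add_distrib, Finset.sum_const, Nat.card_Ioc, smul_eq_mul,
          ← Finset.mul_sum]
        omega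
      have hring : (m + 42) * (m + 42 + 2) = m * (m + 2) + (84 * m + 1848) := by ring
      omega

lemma key245 : ∀ r, 10 ≤ r → (∑ j ∈ Finset.Icc 1 r, ((1 + 2 * (j / 2)) + (1 + 2 * (j / 4)) + (1 + 2 * (j / 5)))) < r * (r + 2) := by
  intro r
  induction r using Nat.strong_induction_on with
  | _ r ih =>
    intro hr
    by_cases h : r ≤ 29
    · interval_cases r <;> decide
    · obtain ⟨m, rfl⟩ : ∃ m, r = m + 20 := ⟨r - 20, by omega⟩
      have ih' := ih m (by omega) (by omega)
      rw [show Finset.Icc 1 = Finset.Icc (0 + 1) from rfl, Finset.Icc_add_one_left_eq_Ioc] at ih' ⊢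
      rw [← Finset.sum_Ioc_consecutive _ (Nat.zero_le m) (by omega : m ≤ m + 20)]
      have h2 := two_mul_sum_div 2 m (by norm_num) 10
      have h4 := two_mul_sum_div 4 m (by norm_num) 5
      have h5 := two_mul_sum_div 5 m (by norm_num) 4
      norm_num at h2 h4 h5
      have hW : (∑ j ∈ Finset.Ioc m (m + 20), ((1 + 2 * (j / 2)) + (1 + 2 * (j / 4)) + (1 + 2 * (j / 5))))
          = 60 + 2 * (∑ j ∈ Finset.Ioc m (m + 20), j / 2) + 2 * (∑ j ∈ Finset.Ioc m (m + 20), j / 4)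
            + 2 * (∑ j ∈ Finset.Ioc m (m + 20), j / 5) := by
        simp only [Finset.sum_add_distrib, Finset.sum_const, Nat.card_Ioc, smul_eq_mul,
          ← Finset.mul_sum]
        omega
      have hring : (m + 20) * (m + 20 + 2) = m * (m + 2) + (40 * m + 440) := by ring
      omega

lemma key334 : ∀ r, 10 ≤ r → (∑ j ∈ Finset.Icc 1 r, ((1 + 2 * (j / 3)) + (1 + 2 * (j / 3)) + (1 + 2 * (j / 4)))) < r * (r + 2) := by
  intro r
  induction r using Nat.strong_induction_on with
  | _ r ih =>
    intro hr
    by_cases h : r ≤ 21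
    · interval_cases r <;> decide
    · obtain ⟨m, rfl⟩ : ∃ m, r = m + 12 := ⟨r - 12, by omega⟩
      have ih' := ih m (by omega) (by omega)
      rw [show Finset.Icc 1 = Finset.Icc (0 + 1) from rfl, Finset.Icc_add_one_left_eq_Ioc] at ih' ⊢
      rw [← Finset.sum_Ioc_consecutive _ (Nat.zero_le m) (by omega : m ≤ m + 12)]
      have h3 := two_mul_sum_div 3 m (by norm_num) 4
      have h4 := two_mul_sum_div 4 m (by norm_num) 3
      norm_num at h3 h4
      have hW : (∑ j ∈ Finset.Ioc m (m + 12), ((1 + 2 * (j / 3)) + (1 + 2 * (j / 3)) + (1 + 2 * (j / 4))))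
          = 36 + 4 * (∑ j ∈ Finset.Ioc m (m + 12), j / 3)
            + 2 * (∑ j ∈ Finset.Ioc m (m + 12), j / 4) := by
        simp only [Finset.sum_add_distrib, Finset.sum_const, Nat.card_Ioc, smul_eq_mul,
          ← Finset.mul_sum]
        omega
      have hring : (m + 12) * (m + 12 + 2) = m * (m + 2) + (24 * m + 168) := by ring
      omega

theorem typeA_inequality_large_rank (a b c r : ℕ) (ha : 0 < a) (hab : a ≤ b) (hbc : b ≤ c)
    (hhyp : (1 : ℚ)/a + 1/b + 1/c < 1) (hr : 10 ≤ r) :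
    ∑ j ∈ Finset.Icc 1 r, ((1 + 2 * (j / a)) + (1 + 2 * (j / b)) + (1 + 2 * (j / c)))
      < r * (r + 2) := by
  have hb : 0 < b := lt_of_lt_of_le ha hab
  have hc : 0 < c := lt_of_lt_of_le hb hbc
  -- integer form of hyperbolicity
  have hN : b * c + a * c + a * b < a * b * c := by
    have ha' : (a:ℚ) ≠ 0 := Nat.cast_ne_zero.2 ha.ne'
    have hb' : (b:ℚ) ≠ 0 := Nat.cast_ne_zero.2 hb.ne'
    have hc' : (c:ℚ) ≠ 0 := Nat.cast_ne_zero.2 hc.ne'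
    have h : ((b * c + a * c + a * b : ℕ) : ℚ) < ((a * b * c : ℕ) : ℚ) := by
      push_cast
      rw [div_add_div _ _ ha' hb', div_add_div _ _ (by positivity) hc',
        div_lt_one (by positivity)] at hhyp
      nlinarith [hhyp]
    exact_mod_cast h
  -- monotonicity of the sum in (a,b,c)
  have mono : ∀ p q t : ℕ, 0 < p → 0 < q → 0 < t → p ≤ a → q ≤ b → t ≤ c →
      (∑ j ∈ Finset.Icc 1 r, ((1 + 2 * (j / a)) + (1 + 2 * (j / b)) + (1 + 2 * (j / c))))
      ≤ ∑ j ∈ Finset.Icc 1 r, ((1 + 2 * (j / p)) + (1 + 2 * (j / q)) + (1 + 2 * (j / t))) := by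
    intro p q t hp hq ht hpa hqb htc
    refine Finset.sum_le_sum (fun j _ => ?_)
    have h1 : j / a ≤ j / p := Nat.div_le_div_left hpa hp
    have h2 : j / b ≤ j / q := Nat.div_le_div_left hqb hq
    have h3 : j / c ≤ j / t := Nat.div_le_div_left htc ht
    omega
  -- classification: every hyperbolic triple dominates (2,3,7), (2,4,5) or (3,3,4)
  have hcases : (2 ≤ a ∧ 3 ≤ b ∧ 7 ≤ c) ∨ (2 ≤ a ∧ 4 ≤ b ∧ 5 ≤ c) ∨ (3 ≤ a ∧ 3 ≤ b ∧ 4 ≤ c) := by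
    have ha2 : 2 ≤ a := by
      by_contra hcon
      have : a = 1 := by omega
      subst this
      nlinarith
    rcases Nat.lt_or_ge a 3 with h3 | h3
    · -- a = 2
      have : a = 2 := by omega
      subst this
      have hb3 : 3 ≤ b := by
        by_contra hcon
        have : b = 2 := by omega
        subst this
        nlinarith
      rcases Nat.lt_or_ge b 4 with h4 | h4
      · -- b = 3
        have : b = 3 := by omega
        subst this
        left
        refine ⟨le_refl 2, le_refl 3, ?_⟩
        nlinarith
      · -- b ≥ 4
        right; left
        refine ⟨le_refl 2, h4, ?_⟩
        by_contra hcon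
        have hc4 : c = 4 := by omega
        have hb4 : b = 4 := by omega
        subst hc4; subst hb4
        nlinarith
    · -- a ≥ 3
      right; right
      refine ⟨h3, le_trans h3 hab, ?_⟩
      by_contra hcon
      have h0 : c = 3 := by omega
      have h1 : b = 3 := by omega
      have h2 : a = 3 := by omega
      subst h0; subst h1; subst h2
      nlinarith
  rcases hcases with ⟨h1, h2, h3⟩ | ⟨h1, h2, h3⟩ | ⟨h1, h2, h3⟩
  · exact lt_of_le_of_lt (mono 2 3 7 (by norm_num) (by norm_num) (by norm_num) h1 h2 h3)
      (key237 r hr)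
  · exact lt_of_le_of_lt (mono 2 4 5 (by norm_num) (by norm_num) (by norm_num) h1 h2 h3)
      (key245 r hr)
  · exact lt_of_le_of_lt (mono 3 3 4 (by norm_num) (by norm_num) (by norm_num) h1 h2 h3)
      (key334 r hr)
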